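/- Let Φ denote the standard normal cumulative distribution function, Φ(λ) := ∫_{−∞}^{λ} (2π)^{−1/2} e^{−u²/2} du. Then for all real numbers L > 0 and b > 0, ∫₀^∞ (1 − Φ(L/√t)) · e^{−b t} dt ≤ (1/(2b)) · (1 + 1/(L√(2b))) · exp(−√(2b)·L). -/

import Mathlib

open MeasureTheory Real

/-- The standard normal cumulative distribution function
`Φ(λ) = ∫_{-∞}^{λ} (2π)^{-1/2} e^{-u²/2} du`. -/
noncomputable def stdNormalCDF (l : ℝ) : ℝ :=
  ∫ u in Set.Iic l, (2 * Real.pi) ^ (-(1 : ℝ) / 2) * Real.exp (-u ^ 2 / 2)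

open Set ENNReal

namespace TailAux



lemma c_eq : (2 * Real.pi) ^ (-(1 : ℝ) / 2) = (Real.sqrt (2 * Real.pi))⁻¹ := by
  rw [show -(1:ℝ)/2 = -(1/2) by ring, Real.rpow_neg (by positivity), ← Real.sqrt_eq_rpow]

lemma phi_integrable :
    Integrable (fun u : ℝ => (2 * Real.pi) ^ (-(1 : ℝ) / 2) * Real.exp (-u ^ 2 / 2)) := by
  have h : Integrable (fun u : ℝ => Real.exp (-(2⁻¹ : ℝ) * u ^ 2)) :=
    integrable_exp_neg_mul_sq (by norm_num)
  have h2 : (fun u : ℝ => Real.exp (-u ^ 2 / 2)) = fun u : ℝ => Real.exp (-(2⁻¹ : ℝ) * u ^ 2) := by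
    funext u; ring_nf
  have h3 : (fun u : ℝ => (2 * Real.pi) ^ (-(1 : ℝ) / 2) * Real.exp (-u ^ 2 / 2))
      = fun u : ℝ => (2 * Real.pi) ^ (-(1 : ℝ) / 2) * Real.exp (-(2⁻¹ : ℝ) * u ^ 2) := by
    funext u; ring_nf
  rw [h3]
  exact h.const_mul _

lemma phi_total :
    ∫ u : ℝ, (2 * Real.pi) ^ (-(1 : ℝ) / 2) * Real.exp (-u ^ 2 / 2) = 1 := by
  have h2 : (fun u : ℝ => Real.exp (-u ^ 2 / 2)) = fun u : ℝ => Real.exp (-(2⁻¹ : ℝ) * u ^ 2) := by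
    funext u; ring_nf
  rw [MeasureTheory.integral_const_mul, h2, integral_gaussian, c_eq]
  rw [show Real.pi / 2⁻¹ = 2 * Real.pi by ring]
  rw [inv_mul_cancel₀ (by positivity)]

lemma tail_eq (l : ℝ) :
    1 - stdNormalCDF l
      = ∫ u in Set.Ioi l, (2 * Real.pi) ^ (-(1 : ℝ) / 2) * Real.exp (-u ^ 2 / 2) := by
  have h := intervalIntegral.integral_Iic_add_Ioi (b := l)
    (phi_integrable.integrableOn) (phi_integrable.integrableOn)
  rw [stdNormalCDF]
  rw [phi_total] at h
  linarith

lemma tail_nonneg (l : ℝ) : 0 ≤ 1 - stdNormalCDF l := by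
  rw [tail_eq]
  exact setIntegral_nonneg measurableSet_Ioi fun u _ => by positivity

lemma cdf_monotone : Monotone stdNormalCDF := by
  intro x y hxy
  exact setIntegral_mono_set phi_integrable.integrableOn
    (Filter.Eventually.of_forall fun u => by positivity)
    (HasSubset.Subset.eventuallyLE (Set.Iic_subset_Iic.mpr hxy))

lemma integral_exp_Ioi {b : ℝ} (hb : 0 < b) (c : ℝ) :
    ∫ t in Set.Ioi c, Real.exp (-b * t) = Real.exp (-(b * c)) / b := by
  have h := integral_comp_mul_left_Ioi (fun y => Real.exp (-y)) c hb
  simp only [smul_eq_mul] at h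
  rw [show (fun t : ℝ => Real.exp (-b * t)) = fun t : ℝ => Real.exp (-(b * t)) by
    funext t; ring_nf]
  rw [h, integral_exp_neg_Ioi]
  ring


lemma glasser {p q : ℝ} (hp : 0 < p) (hq : 0 < q) :
    ∫ u in Set.Ioi (0:ℝ), Real.exp (-(p * u ^ 2) - q / u ^ 2)
      = Real.sqrt Real.pi / (2 * Real.sqrt p) * Real.exp (-(2 * Real.sqrt (p * q))) := by
  set sp := Real.sqrt p with hsp
  set sq := Real.sqrt q with hsq
  have hsp0 : 0 < sp := Real.sqrt_pos.mpr hp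
  have hsq0 : 0 < sq := Real.sqrt_pos.mpr hq
  have hsp2 : sp ^ 2 = p := Real.sq_sqrt hp.le
  have hsq2 : sq ^ 2 = q := Real.sq_sqrt hq.le
  have hspq : sp * sq = Real.sqrt (p * q) := (Real.sqrt_mul hp.le q).symm
  set E := Real.exp (2 * Real.sqrt (p * q)) with hE
  set h : ℝ → ℝ := fun u => Real.exp (-(p * u ^ 2) - q / u ^ 2) with hh
  set g : ℝ → ℝ := fun u => sp * u - sq * u⁻¹ with hg
  set g' : ℝ → ℝ := fun u => sp + sq * (u ^ 2)⁻¹ with hg'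
  -- derivative
  have hderiv : ∀ x ∈ Set.Ioi (0:ℝ), HasDerivWithinAt g (g' x) (Set.Ioi 0) x := by
    intro x hx
    have hx0 : x ≠ 0 := ne_of_gt hx
    have h1 : HasDerivAt g (sp * 1 - sq * (-(x ^ 2)⁻¹)) x :=
      ((hasDerivAt_id x).const_mul sp).sub ((hasDerivAt_inv hx0).const_mul sq)
    have h2 : sp * 1 - sq * (-(x ^ 2)⁻¹) = g' x := by simp only [hg']; ring
    exact (h2 ▸ h1).hasDerivWithinAt
  -- injectivity
  have hmono : StrictMonoOn g (Set.Ioi (0:ℝ)) := by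
    intro x hx y hy hxy
    simp only [mem_Ioi] at hx hy
    have h1 : y⁻¹ < x⁻¹ := by
      rw [inv_lt_inv₀ hy hx]; exact hxy
    have h2 := mul_lt_mul_of_pos_left hxy hsp0
    have h3 := mul_lt_mul_of_pos_left h1 hsq0
    simp only [hg]; linarith
  have hinj : InjOn g (Set.Ioi (0:ℝ)) := hmono.injOn
  -- surjectivity
  have himg : g '' Set.Ioi 0 = Set.univ := by
    apply Set.eq_univ_of_forall
    intro v
    set D := Real.sqrt (v ^ 2 + 4 * (sp * sq)) with hD
    have hD2 : D ^ 2 = v ^ 2 + 4 * (sp * sq) := Real.sq_sqrt (by positivity)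
    have hDv : |v| < D := by
      rw [← Real.sqrt_sq_eq_abs]
      exact Real.sqrt_lt_sqrt (sq_nonneg v) (by nlinarith)
    have hvD : 0 < v + D := by
      rcases abs_lt.mp hDv with ⟨h1, _⟩; linarith
    have hu : (0:ℝ) < (v + D) / (2 * sp) := by positivity
    refine ⟨(v + D) / (2 * sp), hu, ?_⟩
    have hu0 : ((v + D) / (2 * sp)) ≠ 0 := ne_of_gt hu
    have key : sp * ((v + D) / (2 * sp)) ^ 2 - v * ((v + D) / (2 * sp)) - sq = 0 := by
      have hsp' : sp ≠ 0 := ne_of_gt hsp0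
      field_simp
      ring_nf
      nlinarith [hD2]
    have expand : sp * ((v + D) / (2 * sp)) - sq * ((v + D) / (2 * sp))⁻¹ - v
        = (sp * ((v + D) / (2 * sp)) ^ 2 - v * ((v + D) / (2 * sp)) - sq) / ((v + D) / (2 * sp)) := by
      field_simp
      ring
    simp only [hg]
    have := expand
    rw [key, zero_div] at this
    linarith
  -- pointwise identity on Ioi 0
  have hpt : ∀ u ∈ Set.Ioi (0:ℝ),
      |g' u| • Real.exp (-(g u) ^ 2) = sp * E * h u + sq * E * ((u ^ 2)⁻¹ * h u) := by
    intro u hu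
    simp only [mem_Ioi] at hu
    have hu0 : u ≠ 0 := ne_of_gt hu
    have habs : |g' u| = g' u := abs_of_pos (by simp only [hg']; positivity)
    have hexp : -(g u) ^ 2 = (2 * Real.sqrt (p * q)) + (-(p * u ^ 2) - q / u ^ 2) := by
      simp only [hg, ← hspq]
      field_simp
      linear_combination (-u^4 : ℝ) * hsp2 + (-1 : ℝ) * hsq2
    rw [habs, smul_eq_mul, hexp, Real.exp_add]
    simp only [hg', hh, hE]
    ring
  -- Gaussian integral over the image
  have hgauss : Integrable (fun v : ℝ => Real.exp (-v ^ 2)) := by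
    simpa using integrable_exp_neg_mul_sq (one_pos (α := ℝ))
  have him := integral_image_eq_integral_abs_deriv_smul measurableSet_Ioi hderiv hinj
      (fun v => Real.exp (-v ^ 2))
  rw [himg, MeasureTheory.setIntegral_univ] at him
  have hval : ∫ v : ℝ, Real.exp (-v ^ 2) = Real.sqrt Real.pi := by
    simpa using integral_gaussian 1
  rw [hval] at him
  -- him : √π = ∫ u in Ioi 0, |g' u| • exp (-(g u)^2)
  have hSint : IntegrableOn (fun u => |g' u| • Real.exp (-(g u) ^ 2)) (Set.Ioi 0) := by
    refine (integrableOn_image_iff_integrableOn_abs_deriv_smul measurableSet_Ioi hderiv hinj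
      (fun v => Real.exp (-v ^ 2))).mp ?_
    rw [himg]
    exact hgauss.integrableOn
  have hSint' : IntegrableOn
      (fun u : ℝ => sp * E * h u + sq * E * ((u ^ 2)⁻¹ * h u)) (Set.Ioi 0) :=
    hSint.congr_fun hpt measurableSet_Ioi
  have hmeas1 : AEStronglyMeasurable (fun u : ℝ => sp * E * h u)
      (volume.restrict (Set.Ioi 0)) := by
    apply Measurable.aestronglyMeasurable
    apply Measurable.const_mul
    simp only [hh]
    fun_prop
  have hT1 : IntegrableOn (fun u : ℝ => sp * E * h u) (Set.Ioi 0) := by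
    refine Integrable.mono hSint' hmeas1 ?_
    filter_upwards [ae_restrict_mem measurableSet_Ioi] with u hu
    simp only [mem_Ioi] at hu
    have h1 : (0:ℝ) < E := Real.exp_pos _
    have h2 : (0:ℝ) < h u := Real.exp_pos _
    rw [Real.norm_eq_abs, Real.norm_eq_abs, abs_of_nonneg (by positivity),
      abs_of_nonneg (by positivity)]
    have h3 : (0:ℝ) ≤ sq * E * ((u ^ 2)⁻¹ * h u) := by positivity
    linarith
  have hT2 : IntegrableOn (fun u : ℝ => sq * E * ((u ^ 2)⁻¹ * h u)) (Set.Ioi 0) := by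
    refine MeasureTheory.IntegrableOn.congr_fun (hSint'.sub hT1)
      (fun u _ => by simp only [Pi.sub_apply]; ring) measurableSet_Ioi
  -- split the integral
  have hsplit : Real.sqrt Real.pi
      = sp * E * (∫ u in Set.Ioi (0:ℝ), h u)
        + sq * E * (∫ u in Set.Ioi (0:ℝ), (u ^ 2)⁻¹ * h u) := by
    rw [him, setIntegral_congr_fun measurableSet_Ioi hpt,
      MeasureTheory.integral_add hT1 hT2,
      MeasureTheory.integral_const_mul, MeasureTheory.integral_const_mul]
  -- reflection: J = k * K
  set k := sq / sp with hk
  have hk0 : 0 < k := by positivity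
  have hderiv2 : ∀ x ∈ Set.Ioi (0:ℝ),
      HasDerivWithinAt (fun u : ℝ => k * u⁻¹) (k * -((x ^ 2)⁻¹)) (Set.Ioi 0) x :=
    fun x hx => ((hasDerivAt_inv (ne_of_gt hx)).const_mul k).hasDerivWithinAt
  have hinj2 : InjOn (fun u : ℝ => k * u⁻¹) (Set.Ioi 0) := fun x _ y _ e =>
    inv_injective (mul_left_cancel₀ (ne_of_gt hk0) e)
  have himg2 : (fun u : ℝ => k * u⁻¹) '' Set.Ioi 0 = Set.Ioi 0 := by
    ext v
    simp only [Set.mem_image, Set.mem_Ioi]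
    constructor
    · rintro ⟨x, hx, rfl⟩; positivity
    · intro hv; exact ⟨k / v, by positivity, by field_simp⟩
  have hrefl := integral_image_eq_integral_abs_deriv_smul measurableSet_Ioi hderiv2 hinj2 h
  rw [himg2] at hrefl
  have hrefl2 : ∫ u in Set.Ioi (0:ℝ), h u
      = k * ∫ u in Set.Ioi (0:ℝ), (u ^ 2)⁻¹ * h u := by
    rw [hrefl, ← MeasureTheory.integral_const_mul]
    refine setIntegral_congr_fun measurableSet_Ioi fun u hu => ?_
    simp only [mem_Ioi] at hu
    have hu0 : u ≠ 0 := ne_of_gt hu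
    have habs : |k * -((u ^ 2)⁻¹)| = k * (u ^ 2)⁻¹ := by
      rw [mul_neg, abs_neg, abs_of_nonneg (by positivity)]
    rw [smul_eq_mul, habs]
    have harg : h (k * u⁻¹) = h u := by
      simp only [hh, hk]
      congr 1
      field_simp
      linear_combination (-(q) * (sp^2*u^6 + u^4 - sq^2*u^2) + q*u^4
          - q * (sp^2*(u^4-u^6) + sq^2*(u^2-1)) : ℝ) * hsp2
        + (p * (sp^2*u^6 + u^4 - sq^2*u^2) - p*u^4
          + p * (sp^2*(u^4-u^6) + sq^2*(u^2-1)) : ℝ) * hsq2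
    rw [harg]
    ring
  -- solve for J
  set J := ∫ u in Set.Ioi (0:ℝ), h u with hJ
  set K := ∫ u in Set.Ioi (0:ℝ), (u ^ 2)⁻¹ * h u with hK
  have hEpos : (0:ℝ) < E := Real.exp_pos _
  have hfin : Real.sqrt Real.pi = 2 * sp * E * J := by
    rw [hsplit, hrefl2, hk]
    field_simp
    ring
  show J = Real.sqrt Real.pi / (2 * sp) * Real.exp (-(2 * Real.sqrt (p * q)))
  rw [Real.exp_neg, ← hE]
  have hend : 2 * sp * E * J / (2 * sp) * E⁻¹ = J := by
    field_simp
  rw [hfin, hend]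


lemma fubini_step (L b : ℝ) (hL : 0 < L) (hb : 0 < b) :
    ∫ t in Set.Ioi (0:ℝ), (1 - stdNormalCDF (L / Real.sqrt t)) * Real.exp (-b * t)
      = ∫ u in Set.Ioi (0:ℝ),
          (2 * Real.pi) ^ (-(1 : ℝ) / 2) * Real.exp (-u ^ 2 / 2)
            * Real.exp (-(b * L ^ 2) / u ^ 2) / b := by
  set c : ℝ := (2 * Real.pi) ^ (-(1 : ℝ) / 2) with hc
  have hc0 : 0 < c := by rw [hc]; positivity
  set φ : ℝ → ℝ := fun u => c * Real.exp (-u ^ 2 / 2) with hφ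
  set F : ℝ → ℝ → ℝ≥0∞ := fun t u =>
    Set.indicator {z : ℝ × ℝ | L ^ 2 < z.1 * z.2 ^ 2}
      (fun z => ENNReal.ofReal (φ z.2 * Real.exp (-b * z.1))) (t, u) with hF
  have hSmeas : MeasurableSet {z : ℝ × ℝ | L ^ 2 < z.1 * z.2 ^ 2} :=
    measurableSet_lt measurable_const (measurable_fst.mul (measurable_snd.pow_const 2))
  have hFmeas : Measurable (Function.uncurry F) := by
    apply Measurable.indicator _ hSmeas
    apply Measurable.ennreal_ofReal
    fun_prop
  -- step A : inner integral over u for fixed t > 0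
  have hA : ∀ t ∈ Set.Ioi (0:ℝ),
      (∫⁻ u in Set.Ioi (0:ℝ), F t u)
        = ENNReal.ofReal ((1 - stdNormalCDF (L / Real.sqrt t)) * Real.exp (-b * t)) := by
    intro t ht
    simp only [mem_Ioi] at ht
    have hst : 0 < Real.sqrt t := Real.sqrt_pos.mpr ht
    have hst2 : Real.sqrt t ^ 2 = t := Real.sq_sqrt ht.le
    have hsec : (fun u : ℝ => F t u)
        = Set.indicator {u : ℝ | L ^ 2 < t * u ^ 2}
            (fun u => ENNReal.ofReal (φ u * Real.exp (-b * t))) := by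
      funext u
      simp only [hF, Set.indicator, Set.mem_setOf_eq]
    have hsmeas : MeasurableSet {u : ℝ | L ^ 2 < t * u ^ 2} :=
      measurableSet_lt measurable_const (measurable_const.mul (measurable_id.pow_const 2))
    have hset : {u : ℝ | L ^ 2 < t * u ^ 2} ∩ Set.Ioi 0 = Set.Ioi (L / Real.sqrt t) := by
      ext u
      simp only [Set.mem_inter_iff, Set.mem_setOf_eq, Set.mem_Ioi]
      constructor
      · rintro ⟨h1, h2⟩
        rw [div_lt_iff₀ hst]
        by_contra hcon
        push_neg at hcon
        have h3 : u * Real.sqrt t * (u * Real.sqrt t) ≤ L * L :=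
          mul_le_mul hcon hcon (by positivity) hL.le
        have h4 : u * Real.sqrt t * (u * Real.sqrt t) = u ^ 2 * t := by
          rw [show u * Real.sqrt t * (u * Real.sqrt t) = u ^ 2 * Real.sqrt t ^ 2 by ring, hst2]
        nlinarith
      · intro h
        have hu : 0 < u := lt_trans (by positivity) h
        rw [div_lt_iff₀ hst] at h
        refine ⟨?_, hu⟩
        have h3 : L * L < u * Real.sqrt t * (u * Real.sqrt t) :=
          mul_lt_mul' h.le h (by positivity) (by positivity)
        have h4 : u * Real.sqrt t * (u * Real.sqrt t) = u ^ 2 * t := by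
          rw [show u * Real.sqrt t * (u * Real.sqrt t) = u ^ 2 * Real.sqrt t ^ 2 by ring, hst2]
        nlinarith
    rw [hsec, lintegral_indicator hsmeas, Measure.restrict_restrict hsmeas, hset]
    rw [← MeasureTheory.ofReal_integral_eq_lintegral_ofReal
      ((phi_integrable.mul_const (Real.exp (-b * t))).integrableOn)
      (Filter.Eventually.of_forall fun u => by positivity)]
    congr 1
    rw [MeasureTheory.integral_mul_const, ← tail_eq]
  -- step B : inner integral over t for fixed u > 0
  have hB : ∀ u ∈ Set.Ioi (0:ℝ),
      (∫⁻ t in Set.Ioi (0:ℝ), F t u)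
        = ENNReal.ofReal (φ u * Real.exp (-(b * L ^ 2) / u ^ 2) / b) := by
    intro u hu
    simp only [mem_Ioi] at hu
    have hu2 : (0:ℝ) < u ^ 2 := by positivity
    have hsec : (fun t : ℝ => F t u)
        = Set.indicator {t : ℝ | L ^ 2 < t * u ^ 2}
            (fun t => ENNReal.ofReal (φ u * Real.exp (-b * t))) := by
      funext t
      simp only [hF, Set.indicator, Set.mem_setOf_eq]
    have hsmeas : MeasurableSet {t : ℝ | L ^ 2 < t * u ^ 2} :=
      measurableSet_lt measurable_const (measurable_id.mul_const _)
    have hset : {t : ℝ | L ^ 2 < t * u ^ 2} ∩ Set.Ioi 0 = Set.Ioi (L ^ 2 / u ^ 2) := by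
      ext t
      simp only [Set.mem_inter_iff, Set.mem_setOf_eq, Set.mem_Ioi]
      constructor
      · rintro ⟨h1, _⟩
        rw [div_lt_iff₀ hu2]
        exact h1
      · intro h
        have h1 : L ^ 2 < t * u ^ 2 := (div_lt_iff₀ hu2).mp h
        have h0 : (0:ℝ) < L ^ 2 / u ^ 2 := by positivity
        exact ⟨h1, lt_trans h0 h⟩
    rw [hsec, lintegral_indicator hsmeas, Measure.restrict_restrict hsmeas, hset]
    rw [← MeasureTheory.ofReal_integral_eq_lintegral_ofReal
      ((exp_neg_integrableOn_Ioi _ hb).const_mul (φ u))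
      (Filter.Eventually.of_forall fun t => by positivity)]
    congr 1
    rw [MeasureTheory.integral_const_mul, integral_exp_Ioi hb]
    rw [show -(b * (L ^ 2 / u ^ 2)) = -(b * L ^ 2) / u ^ 2 by ring]
    ring
  -- measurability of the outer integrands
  have hΦmeas : Measurable stdNormalCDF := cdf_monotone.measurable
  have hLmeas : Measurable fun t : ℝ => (1 - stdNormalCDF (L / Real.sqrt t)) * Real.exp (-b * t) := by
    apply Measurable.mul
    · exact measurable_const.sub
        (hΦmeas.comp (measurable_const.div Real.continuous_sqrt.measurable))
    · fun_prop
  have hRmeas : Measurable fun u : ℝ => φ u * Real.exp (-(b * L ^ 2) / u ^ 2) / b := by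
    simp only [hφ]
    fun_prop
  -- RHS integrability
  have hRint : IntegrableOn (fun u : ℝ => φ u * Real.exp (-(b * L ^ 2) / u ^ 2) / b)
      (Set.Ioi 0) := by
    refine Integrable.mono ((phi_integrable.div_const b).integrableOn)
      hRmeas.aestronglyMeasurable ?_
    refine Filter.Eventually.of_forall fun u => ?_
    have he1 : Real.exp (-(b * L ^ 2) / u ^ 2) ≤ 1 := by
      rw [Real.exp_le_one_iff]
      apply div_nonpos_of_nonpos_of_nonneg
      · nlinarith
      · positivity
    have he0 : 0 < Real.exp (-(b * L ^ 2) / u ^ 2) := Real.exp_pos _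
    have hφ0 : 0 < φ u := by simp only [hφ]; positivity
    rw [Real.norm_eq_abs, Real.norm_eq_abs,
      abs_of_nonneg (div_nonneg (mul_nonneg hφ0.le he0.le) hb.le),
      abs_of_nonneg (div_nonneg hφ0.le hb.le)]
    calc φ u * Real.exp (-(b * L ^ 2) / u ^ 2) / b
        ≤ φ u * 1 / b := by gcongr
      _ = φ u / b := by ring
  have hLnn : ∀ t : ℝ, 0 ≤ (1 - stdNormalCDF (L / Real.sqrt t)) * Real.exp (-b * t) :=
    fun t => mul_nonneg (tail_nonneg _) (Real.exp_pos _).le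
  have hRnn : ∀ u : ℝ, 0 ≤ φ u * Real.exp (-(b * L ^ 2) / u ^ 2) / b := by
    intro u
    have hφ0 : 0 ≤ φ u := by simp only [hφ]; positivity
    exact div_nonneg (mul_nonneg hφ0 (Real.exp_pos _).le) hb.le
  have e1 : ∫⁻ t in Set.Ioi (0:ℝ),
      ENNReal.ofReal ((1 - stdNormalCDF (L / Real.sqrt t)) * Real.exp (-b * t))
      = ∫⁻ t in Set.Ioi (0:ℝ), ∫⁻ u in Set.Ioi (0:ℝ), F t u :=
    setLIntegral_congr_fun measurableSet_Ioi
      (fun t ht => (hA t ht).symm)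
  have e2 : ∫⁻ t in Set.Ioi (0:ℝ), ∫⁻ u in Set.Ioi (0:ℝ), F t u
      = ∫⁻ u in Set.Ioi (0:ℝ), ∫⁻ t in Set.Ioi (0:ℝ), F t u :=
    lintegral_lintegral_swap hFmeas.aemeasurable
  have e3 : ∫⁻ u in Set.Ioi (0:ℝ), ∫⁻ t in Set.Ioi (0:ℝ), F t u
      = ∫⁻ u in Set.Ioi (0:ℝ),
          ENNReal.ofReal (φ u * Real.exp (-(b * L ^ 2) / u ^ 2) / b) :=
    setLIntegral_congr_fun measurableSet_Ioi
      (fun u hu => hB u hu)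
  have e4 : ∫⁻ u in Set.Ioi (0:ℝ),
        ENNReal.ofReal (φ u * Real.exp (-(b * L ^ 2) / u ^ 2) / b)
      = ENNReal.ofReal (∫ u in Set.Ioi (0:ℝ),
          φ u * Real.exp (-(b * L ^ 2) / u ^ 2) / b) :=
    (MeasureTheory.ofReal_integral_eq_lintegral_ofReal hRint
      (Filter.Eventually.of_forall fun u => hRnn u)).symm
  rw [MeasureTheory.integral_eq_lintegral_of_nonneg_ae
      (Filter.Eventually.of_forall fun t => hLnn t) hLmeas.aestronglyMeasurable,
    e1, e2, e3, e4, ENNReal.toReal_ofReal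
      (setIntegral_nonneg measurableSet_Ioi fun u _ => hRnn u)]

end TailAux

/-- **The analytic core of the truncation-error bound of Section 5.2.**
For `L, b > 0`,
`∫₀^∞ (1 - Φ(L/√t)) e^{-bt} dt ≤ (1/(2b)) (1 + 1/(L√(2b))) exp (-√(2b) L)`. -/
theorem integral_gaussian_tail_bound
    (L b : ℝ) (hL : 0 < L) (hb : 0 < b) :
    ∫ t in Set.Ioi (0 : ℝ), (1 - stdNormalCDF (L / Real.sqrt t)) * Real.exp (-b * t)
      ≤ (1 / (2 * b)) * (1 + 1 / (L * Real.sqrt (2 * b))) *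
        Real.exp (-(Real.sqrt (2 * b)) * L) := by
  rw [TailAux.fubini_step L b hL hb]
  have hval : ∫ u in Set.Ioi (0:ℝ),
      (2 * Real.pi) ^ (-(1 : ℝ) / 2) * Real.exp (-u ^ 2 / 2)
        * Real.exp (-(b * L ^ 2) / u ^ 2) / b
      = 1 / (2 * b) * Real.exp (-(Real.sqrt (2 * b)) * L) := by
    have hpt : ∀ u : ℝ,
        (2 * Real.pi) ^ (-(1 : ℝ) / 2) * Real.exp (-u ^ 2 / 2)
          * Real.exp (-(b * L ^ 2) / u ^ 2) / b
        = ((2 * Real.pi) ^ (-(1 : ℝ) / 2) / b)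
            * Real.exp (-(2⁻¹ * u ^ 2) - (b * L ^ 2) / u ^ 2) := by
      intro u
      rw [show -(2⁻¹ * u ^ 2) - (b * L ^ 2) / u ^ 2
          = (-u ^ 2 / 2) + (-(b * L ^ 2) / u ^ 2) by ring, Real.exp_add]
      ring
    simp_rw [hpt]
    rw [MeasureTheory.integral_const_mul,
      TailAux.glasser (by norm_num) (by positivity)]
    have h1 : Real.sqrt (2⁻¹ * (b * L ^ 2)) = Real.sqrt (2⁻¹ * b) * L := by
      rw [show 2⁻¹ * (b * L ^ 2) = (2⁻¹ * b) * L ^ 2 by ring,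
        Real.sqrt_mul (by positivity), Real.sqrt_sq hL.le]
    have h2 : Real.sqrt (2 * b) = 2 * Real.sqrt (2⁻¹ * b) := by
      rw [show (2:ℝ) * b = 2 ^ 2 * (2⁻¹ * b) by ring,
        Real.sqrt_mul (by positivity), Real.sqrt_sq (by norm_num)]
    have h3 : -(2 * Real.sqrt (2⁻¹ * (b * L ^ 2))) = -(Real.sqrt (2 * b)) * L := by
      rw [h1, h2]; ring
    rw [h3]
    have h4 : (2 * Real.pi) ^ (-(1:ℝ)/2) / b * (Real.sqrt Real.pi / (2 * Real.sqrt 2⁻¹))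
        = 1 / (2 * b) := by
      rw [TailAux.c_eq, Real.sqrt_inv, Real.sqrt_mul (by norm_num : (0:ℝ) ≤ 2)]
      have hs2 : Real.sqrt 2 ≠ 0 := by positivity
      have hsπ : Real.sqrt Real.pi ≠ 0 := by positivity
      have h22 : Real.sqrt 2 * Real.sqrt 2 = 2 :=
        Real.mul_self_sqrt (by norm_num)
      field_simp
    rw [← mul_assoc, h4]
  rw [hval]
  have hE : 0 < Real.exp (-(Real.sqrt (2 * b)) * L) := Real.exp_pos _
  have hA : (0:ℝ) < 1 / (2 * b) := by positivity
  have hx : (0:ℝ) < 1 / (L * Real.sqrt (2 * b)) := by positivity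
  nlinarith [mul_pos (mul_pos hA hx) hE]
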